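/- In the two-player interconnected contest with Tullock contest success function with parameter γ ∈ (0,1], for a pair of effective-effort vectors (y_1, y_2) define B⁺(y_1,y_2) = {k ∈ B : y_1^k > 0 and y_2^k > 0} and, for i ∈ {1,2}, A_i(y_1,y_2) = {k ∈ B : y_i^k > 0 and y_{-i}^k = 0}. Then for any two pairs (y*_1, y*_2) ∈ T_1 × T_2 and (y**_1, y**_2) ∈ T_1 × T_2 of equilibrium effective-effort vectors, B⁺(y*_1,y*_2) = B⁺(y**_1,y**_2), A_1(y*_1,y*_2) = A_1(y**_1,y**_2), and A_2(y*_1,y*_2) = A_2(y**_1,y**_2). -/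

import Mathlib

open Finset Matrix

/-- Effective effort of a player with spillover matrix `ρ` and effort vector `e`
at battlefield `k`: `y^k = e^k + ∑_{l ≠ k} ρ^{l,k} e^l`. -/
noncomputable def effY {m : ℕ} (ρ : Matrix (Fin m) (Fin m) ℝ) (e : Fin m → ℝ)
    (k : Fin m) : ℝ :=
  e k + ∑ l ∈ Finset.univ.erase k, ρ l k * e l

/-- Tullock contest success function with parameter `γ`.  When both effective
efforts are `0` this gives `0/0 = 0`, matching the convention. -/
noncomputable def tullock (γ y₁ y₂ : ℝ) : ℝ :=
  y₁ ^ γ / (y₁ ^ γ + y₂ ^ γ)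

/-- Payoff of player `i` in the interconnected contest. -/
noncomputable def payoff {m : ℕ} (γ : ℝ) (v : Fin m → ℝ) (c : Fin 2 → ℝ)
    (ρ : Fin 2 → Matrix (Fin m) (Fin m) ℝ) (e : Fin 2 → Fin m → ℝ) (i : Fin 2) : ℝ :=
  (∑ k, v k * tullock γ (effY (ρ i) (e i) k) (effY (ρ (1 - i)) (e (1 - i)) k))
    - c i * ∑ k, e i k

/-- Pure strategy Nash equilibrium of the interconnected contest:
nonnegative efforts, and no profitable deviation to any nonnegative effort vector. -/
def IsNashEq {m : ℕ} (γ : ℝ) (v : Fin m → ℝ) (c : Fin 2 → ℝ)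
    (ρ : Fin 2 → Matrix (Fin m) (Fin m) ℝ) (e : Fin 2 → Fin m → ℝ) : Prop :=
  (∀ i k, 0 ≤ e i k) ∧
  ∀ (i : Fin 2) (e' : Fin m → ℝ), (∀ k, 0 ≤ e' k) →
    payoff γ v c ρ (Function.update e i e') i ≤ payoff γ v c ρ e i

/-- Winning probability of player `i` at battlefield `k` under profile `e`. -/
noncomputable def eqProb {m : ℕ} (γ : ℝ) (ρ : Fin 2 → Matrix (Fin m) (Fin m) ℝ)
    (e : Fin 2 → Fin m → ℝ) (i : Fin 2) (k : Fin m) : ℝ :=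
  tullock γ (effY (ρ i) (e i) k) (effY (ρ (1 - i)) (e (1 - i)) k)

section TullockLemmas
variable {γ : ℝ}

lemma tullock_nonneg (hγ : 0 < γ) {a b : ℝ} (ha : 0 ≤ a) (hb : 0 ≤ b) :
    0 ≤ tullock γ a b := by
  have := Real.rpow_nonneg ha γ
  have := Real.rpow_nonneg hb γ
  unfold tullock; positivity

lemma tullock_le_one (hγ : 0 < γ) {a b : ℝ} (ha : 0 ≤ a) (hb : 0 ≤ b) :
    tullock γ a b ≤ 1 := by
  unfold tullock
  rcases eq_or_lt_of_le (add_nonneg (Real.rpow_nonneg ha γ) (Real.rpow_nonneg hb γ)) with h | h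
  · rw [← h, div_zero]; norm_num
  · rw [div_le_one h]
    nlinarith [Real.rpow_nonneg hb γ]

lemma tullock_zero_left (hγ : 0 < γ) (b : ℝ) : tullock γ 0 b = 0 := by
  unfold tullock
  rw [Real.zero_rpow hγ.ne', zero_div]

lemma tullock_pos_zero (hγ : 0 < γ) {a : ℝ} (ha : 0 < a) : tullock γ a 0 = 1 := by
  unfold tullock
  rw [Real.zero_rpow hγ.ne', add_zero, div_self (Real.rpow_pos_of_pos ha γ).ne']

lemma tullock_mono (hγ : 0 < γ) {a a' b : ℝ} (ha : 0 ≤ a) (h : a ≤ a') (hb : 0 ≤ b) :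
    tullock γ a b ≤ tullock γ a' b := by
  have ha' : 0 ≤ a' := ha.trans h
  have hA : a ^ γ ≤ a' ^ γ := Real.rpow_le_rpow ha h hγ.le
  have hA0 : (0:ℝ) ≤ a ^ γ := Real.rpow_nonneg ha γ
  have hB0 : (0:ℝ) ≤ b ^ γ := Real.rpow_nonneg hb γ
  unfold tullock
  rcases eq_or_lt_of_le (add_nonneg (Real.rpow_nonneg ha' γ) hB0) with h2 | h2
  · have h3 : a' ^ γ = 0 := by nlinarith [Real.rpow_nonneg ha' γ]
    have h4 : a ^ γ = 0 := le_antisymm (h3 ▸ hA) hA0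
    simp [h3, h4]
  · rcases eq_or_lt_of_le (add_nonneg hA0 hB0) with h1 | h1
    · rw [← h1, div_zero]; positivity
    · rw [div_le_div_iff₀ h1 h2]
      nlinarith

lemma tullock_compl (hγ : 0 < γ) {a b : ℝ} (ha : 0 ≤ a) (hb : 0 ≤ b)
    (h : 0 < a ∨ 0 < b) : tullock γ b a = 1 - tullock γ a b := by
  have hd : 0 < a ^ γ + b ^ γ := by
    rcases h with h | h
    · have := Real.rpow_pos_of_pos h γ
      have := Real.rpow_nonneg hb γ
      linarith
    · have := Real.rpow_pos_of_pos h γ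
      have := Real.rpow_nonneg ha γ
      linarith
  unfold tullock
  rw [eq_sub_iff_add_eq, add_comm (b ^ γ) (a ^ γ), ← add_div, add_comm (b ^ γ) (a ^ γ), div_self hd.ne']

/-- midpoint convexity (with exact remainder) of `x ↦ B/(B+x)` -/
lemma g_mid {B s s' : ℝ} (hB : 0 < B) (hs : 0 ≤ s) (hs' : 0 ≤ s') :
    B / (B + (s + s') / 2) + (s - s')^2 * B / (4 * (B + s) * (B + s') * (B + (s + s')/2))
      = (B / (B + s) + B / (B + s')) / 2 := by
  have h1 : 0 < B + s := by linarith
  have h2 : 0 < B + s' := by linarith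
  have h3 : 0 < B + (s + s')/2 := by linarith
  field_simp
  ring

lemma g_anti (hγ : 0 < γ) {B x x' : ℝ} (hB : 0 < B) (hx : 0 ≤ x) (h : x ≤ x') :
    B / (B + x') ≤ B / (B + x) :=
  div_le_div_of_nonneg_left hB.le (by linarith) (by linarith)

lemma g_anti_strict {B x x' : ℝ} (hB : 0 < B) (hx : 0 ≤ x) (h : x < x') :
    B / (B + x') < B / (B + x) :=
  div_lt_div_of_pos_left hB (by linarith) (by linarith)

/-- midpoint super-additivity of rpow for `γ ≤ 1`. -/
lemma rpow_mid (hγ0 : 0 < γ) (hγ1 : γ ≤ 1) {y y' : ℝ} (hy : 0 ≤ y) (hy' : 0 ≤ y') :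
    (y ^ γ + y' ^ γ) / 2 ≤ ((y + y') / 2) ^ γ := by
  rcases eq_or_lt_of_le hγ1 with rfl | hγ1
  · simp [Real.rpow_one]
  · rcases eq_or_ne y y' with rfl | hne
    · have : (y + y)/2 = y := by ring
      rw [this]; linarith
    · have := (Real.strictConcaveOn_rpow hγ0 hγ1).2 (Set.mem_Ici.2 hy) (Set.mem_Ici.2 hy')
        hne (by norm_num : (0:ℝ) < 1/2) (by norm_num : (0:ℝ) < 1/2) (by norm_num)
      have h2 : (1/2 : ℝ) • y + (1/2 : ℝ) • y' = (y + y')/2 := by simp [smul_eq_mul]; ring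
      rw [h2] at this
      simp only [smul_eq_mul] at this
      linarith

lemma rpow_mid_strict (hγ0 : 0 < γ) (hγ1 : γ < 1) {y y' : ℝ} (hy : 0 ≤ y) (hy' : 0 ≤ y')
    (hne : y ≠ y') :
    (y ^ γ + y' ^ γ) / 2 < ((y + y') / 2) ^ γ := by
  have := (Real.strictConcaveOn_rpow hγ0 hγ1).2 (Set.mem_Ici.2 hy) (Set.mem_Ici.2 hy')
    hne (by norm_num : (0:ℝ) < 1/2) (by norm_num : (0:ℝ) < 1/2) (by norm_num)
  have h2 : (1/2 : ℝ) • y + (1/2 : ℝ) • y' = (y + y')/2 := by simp [smul_eq_mul]; ring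
  rw [h2] at this
  simp only [smul_eq_mul] at this
  linarith

end TullockLemmas

section Mid
variable {γ : ℝ}

lemma g_chain (hγ0 : 0 < γ) (hγ1 : γ ≤ 1) {Y y y' : ℝ} (hY : 0 < Y)
    (hy : 0 ≤ y) (hy' : 0 ≤ y') :
    Y ^ γ / (Y ^ γ + ((y + y') / 2) ^ γ)
      ≤ (Y ^ γ / (Y ^ γ + y ^ γ) + Y ^ γ / (Y ^ γ + y' ^ γ)) / 2 := by
  set B := Y ^ γ with hBdef
  have hB : 0 < B := Real.rpow_pos_of_pos hY γ
  have hs : 0 ≤ y ^ γ := Real.rpow_nonneg hy γ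
  have hs' : 0 ≤ y' ^ γ := Real.rpow_nonneg hy' γ
  have h1 : B / (B + ((y + y') / 2) ^ γ) ≤ B / (B + (y ^ γ + y' ^ γ) / 2) :=
    g_anti hγ0 hB (by positivity) (rpow_mid hγ0 hγ1 hy hy')
  have h2 := g_mid hB hs hs'
  have h3 : 0 ≤ (y ^ γ - y' ^ γ)^2 * B / (4 * (B + y ^ γ) * (B + y' ^ γ) * (B + (y ^ γ + y' ^ γ)/2)) := by
    positivity
  linarith

lemma g_chain_strict (hγ0 : 0 < γ) (hγ1 : γ ≤ 1) {Y y y' : ℝ} (hY : 0 < Y)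
    (hy : 0 ≤ y) (hy' : 0 ≤ y') (hne : y ≠ y') :
    Y ^ γ / (Y ^ γ + ((y + y') / 2) ^ γ)
      < (Y ^ γ / (Y ^ γ + y ^ γ) + Y ^ γ / (Y ^ γ + y' ^ γ)) / 2 := by
  set B := Y ^ γ with hBdef
  have hB : 0 < B := Real.rpow_pos_of_pos hY γ
  have hs : 0 ≤ y ^ γ := Real.rpow_nonneg hy γ
  have hs' : 0 ≤ y' ^ γ := Real.rpow_nonneg hy' γ
  have h2 := g_mid hB hs hs'
  rcases eq_or_lt_of_le hγ1 with rfl | hγ1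
  · simp only [Real.rpow_one] at *
    have hne2 : y - y' ≠ 0 := sub_ne_zero.2 hne
    have h3 : 0 < (y - y')^2 * B / (4 * (B + y) * (B + y') * (B + (y + y')/2)) := by
      have h4 : 0 < (y - y')^2 := by positivity
      positivity
    linarith
  · have h1 : B / (B + ((y + y') / 2) ^ γ) < B / (B + (y ^ γ + y' ^ γ) / 2) :=
      g_anti_strict hB (by positivity) (rpow_mid_strict hγ0 hγ1 hy hy' hne)
    have h3 : 0 ≤ (y ^ γ - y' ^ γ)^2 * B / (4 * (B + y ^ γ) * (B + y' ^ γ) * (B + (y ^ γ + y' ^ γ)/2)) := by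
      positivity
    linarith

lemma tullock_eq_one_sub (hγ0 : 0 < γ) {Y y : ℝ} (hY : 0 < Y) (hy : 0 ≤ y) :
    tullock γ y Y = 1 - Y ^ γ / (Y ^ γ + y ^ γ) := by
  have := tullock_compl hγ0 hY.le hy (Or.inl hY)
  rw [this]; rfl

lemma tullock_mid_concave (hγ0 : 0 < γ) (hγ1 : γ ≤ 1) {Y y y' : ℝ} (hY : 0 < Y)
    (hy : 0 ≤ y) (hy' : 0 ≤ y') :
    (tullock γ y Y + tullock γ y' Y) / 2 ≤ tullock γ ((y + y') / 2) Y := by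
  rw [tullock_eq_one_sub hγ0 hY hy, tullock_eq_one_sub hγ0 hY hy',
    tullock_eq_one_sub hγ0 hY (by positivity : (0:ℝ) ≤ (y + y')/2)]
  have := g_chain hγ0 hγ1 hY hy hy'
  linarith

lemma tullock_mid_concave_strict (hγ0 : 0 < γ) (hγ1 : γ ≤ 1) {Y y y' : ℝ} (hY : 0 < Y)
    (hy : 0 ≤ y) (hy' : 0 ≤ y') (hne : y ≠ y') :
    (tullock γ y Y + tullock γ y' Y) / 2 < tullock γ ((y + y') / 2) Y := by
  rw [tullock_eq_one_sub hγ0 hY hy, tullock_eq_one_sub hγ0 hY hy',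
    tullock_eq_one_sub hγ0 hY (by positivity : (0:ℝ) ≤ (y + y')/2)]
  have := g_chain_strict hγ0 hγ1 hY hy hy' hne
  linarith

lemma tullock_mid_convex (hγ0 : 0 < γ) (hγ1 : γ ≤ 1) {Y y y' : ℝ} (hY : 0 < Y)
    (hy : 0 ≤ y) (hy' : 0 ≤ y') :
    tullock γ Y ((y + y') / 2) ≤ (tullock γ Y y + tullock γ Y y') / 2 :=
  g_chain hγ0 hγ1 hY hy hy'

lemma tullock_mid_convex_strict (hγ0 : 0 < γ) (hγ1 : γ ≤ 1) {Y y y' : ℝ} (hY : 0 < Y)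
    (hy : 0 ≤ y) (hy' : 0 ≤ y') (hne : y ≠ y') :
    tullock γ Y ((y + y') / 2) < (tullock γ Y y + tullock γ Y y') / 2 :=
  g_chain_strict hγ0 hγ1 hY hy hy' hne

end Mid

section EffY
variable {m : ℕ} {ρ : Matrix (Fin m) (Fin m) ℝ}

lemma effY_nonneg (hρ : ∀ k l, 0 ≤ ρ k l) {e : Fin m → ℝ} (he : ∀ k, 0 ≤ e k) (k : Fin m) :
    0 ≤ effY ρ e k := by
  unfold effY
  have : 0 ≤ ∑ l ∈ Finset.univ.erase k, ρ l k * e l :=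
    Finset.sum_nonneg fun l _ => mul_nonneg (hρ l k) (he l)
  linarith [he k]

lemma self_le_effY (hρ : ∀ k l, 0 ≤ ρ k l) {e : Fin m → ℝ} (he : ∀ k, 0 ≤ e k) (k : Fin m) :
    e k ≤ effY ρ e k := by
  unfold effY
  have : 0 ≤ ∑ l ∈ Finset.univ.erase k, ρ l k * e l :=
    Finset.sum_nonneg fun l _ => mul_nonneg (hρ l k) (he l)
  linarith

lemma effY_mono (hρ : ∀ k l, 0 ≤ ρ k l) {e e' : Fin m → ℝ} (h : ∀ k, e k ≤ e' k) (k : Fin m) :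
    effY ρ e k ≤ effY ρ e' k := by
  unfold effY
  have : ∑ l ∈ Finset.univ.erase k, ρ l k * e l ≤ ∑ l ∈ Finset.univ.erase k, ρ l k * e' l :=
    Finset.sum_le_sum fun l _ => mul_le_mul_of_nonneg_left (h l) (hρ l k)
  linarith [h k]

lemma effY_update_self (e : Fin m → ℝ) (k : Fin m) (x : ℝ) :
    effY ρ (Function.update e k x) k = effY ρ e k - e k + x := by
  unfold effY
  rw [Function.update_self]
  have : ∑ l ∈ Finset.univ.erase k, ρ l k * Function.update e k x l
      = ∑ l ∈ Finset.univ.erase k, ρ l k * e l := by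
    apply Finset.sum_congr rfl
    intro l hl
    rw [Function.update_of_ne (Finset.ne_of_mem_erase hl)]
  rw [this]; ring

lemma effY_avg (e f : Fin m → ℝ) (k : Fin m) :
    effY ρ (fun l => (e l + f l) / 2) k = (effY ρ e k + effY ρ f k) / 2 := by
  unfold effY
  simp only []
  have h : ∑ l ∈ Finset.univ.erase k, ρ l k * ((e l + f l) / 2)
      = (∑ l ∈ Finset.univ.erase k, ρ l k * e l + ∑ l ∈ Finset.univ.erase k, ρ l k * f l) / 2 := by
    rw [← Finset.sum_add_distrib, Finset.sum_div]
    apply Finset.sum_congr rfl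
    intro l _
    ring
  rw [h]
  ring

lemma effY_eq_zero_parts (hρ : ∀ k l, 0 ≤ ρ k l) {e : Fin m → ℝ} (he : ∀ k, 0 ≤ e k)
    {k : Fin m} (h : effY ρ e k = 0) : e k = 0 := by
  have h1 := self_le_effY hρ he k
  linarith [he k]

end EffY

noncomputable def UU {m : ℕ} (γ : ℝ) (v : Fin m → ℝ)
    (ρ0 ρ1 : Matrix (Fin m) (Fin m) ℝ) (a b : Fin m → ℝ) : ℝ :=
  ∑ k, v k * tullock γ (effY ρ0 a k) (effY ρ1 b k)

/-- player 0 plays a best response `a` to `b`. -/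
def BR0 {m : ℕ} (γ : ℝ) (v : Fin m → ℝ) (c0 : ℝ)
    (ρ0 ρ1 : Matrix (Fin m) (Fin m) ℝ) (a b : Fin m → ℝ) : Prop :=
  ∀ a', (∀ k, 0 ≤ a' k) →
    UU γ v ρ0 ρ1 a' b - c0 * ∑ k, a' k ≤ UU γ v ρ0 ρ1 a b - c0 * ∑ k, a k

/-- player 1 plays a best response `b` to `a` (zero-sum `Ψ` form). -/
def BR1 {m : ℕ} (γ : ℝ) (v : Fin m → ℝ) (c1 : ℝ)
    (ρ0 ρ1 : Matrix (Fin m) (Fin m) ℝ) (a b : Fin m → ℝ) : Prop :=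
  ∀ b', (∀ k, 0 ≤ b' k) →
    UU γ v ρ0 ρ1 a b + c1 * ∑ k, b k ≤ UU γ v ρ0 ρ1 a b' + c1 * ∑ k, b' k

section Game
variable {m : ℕ} {γ : ℝ} {v : Fin m → ℝ} {c0 c1 : ℝ}
  {ρ0 ρ1 : Matrix (Fin m) (Fin m) ℝ} {a b : Fin m → ℝ}

/-- If `b` leaves battlefield `k` empty, a best-responding player 0 covers it. -/
lemma posOfZero (hγ0 : 0 < γ) (hv : ∀ k, 0 < v k) (hc0 : 0 < c0)
    (hρ0 : ∀ k l, 0 ≤ ρ0 k l) (hρ1 : ∀ k l, 0 ≤ ρ1 k l)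
    (ha : ∀ k, 0 ≤ a k) (hb : ∀ k, 0 ≤ b k)
    (hBR : BR0 γ v c0 ρ0 ρ1 a b) (k : Fin m) (hbk : effY ρ1 b k = 0) :
    0 < effY ρ0 a k := by
  by_contra h0
  have hY0 : effY ρ0 a k = 0 := le_antisymm (not_lt.1 h0) (effY_nonneg hρ0 ha k)
  have hak : a k = 0 := effY_eq_zero_parts hρ0 ha hY0
  set ε := v k / (2 * c0) with hεdef
  have hε : 0 < ε := by rw [hεdef]; exact div_pos (hv k) (by linarith)
  set a' := Function.update a k ε with ha'def
  have ha' : ∀ l, 0 ≤ a' l := by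
    intro l
    rcases eq_or_ne l k with rfl | hne
    · rw [ha'def, Function.update_self]; exact hε.le
    · rw [ha'def, Function.update_of_ne hne]; exact ha l
  have hle : ∀ l, a l ≤ a' l := by
    intro l
    rcases eq_or_ne l k with rfl | hne
    · rw [ha'def, Function.update_self, hak]; exact hε.le
    · rw [ha'def, Function.update_of_ne hne]
  have hYk : effY ρ0 a' k = ε := by
    rw [ha'def, effY_update_self, hY0, hak]; ring
  -- sum of a'
  have hsum_a : ∑ j, a' j = ε + ∑ j, a j := by
    rw [ha'def, Finset.sum_update_of_mem (Finset.mem_univ k), ← Finset.erase_eq,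
      ← Finset.add_sum_erase Finset.univ a (Finset.mem_univ k), hak, zero_add]
  -- UU gain
  have hUU : UU γ v ρ0 ρ1 a b + v k ≤ UU γ v ρ0 ρ1 a' b := by
    have key : ∑ j, (v j * tullock γ (effY ρ0 a j) (effY ρ1 b j)
        + if j = k then v k else 0) ≤ ∑ j, v j * tullock γ (effY ρ0 a' j) (effY ρ1 b j) := by
      apply Finset.sum_le_sum
      intro j _
      rcases eq_or_ne j k with rfl | hne
      · rw [if_pos rfl, hY0, hbk, tullock_zero_left hγ0, hYk, tullock_pos_zero hγ0 hε]
        linarith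
      · simp only [if_neg hne, add_zero]
        have := tullock_mono hγ0 (effY_nonneg hρ0 ha j) (effY_mono hρ0 hle j)
          (effY_nonneg hρ1 hb j)
        exact mul_le_mul_of_nonneg_left this (hv j).le
    rw [Finset.sum_add_distrib, Finset.sum_ite_eq' Finset.univ k (fun _ => v k)] at key
    simp only [Finset.mem_univ, if_pos] at key
    exact key
  have := hBR a' ha'
  rw [hsum_a] at this
  have hcost : c0 * ε = v k / 2 := by
    rw [hεdef]; field_simp
  have hexp : c0 * (ε + ∑ j, a j) = c0 * ε + c0 * ∑ j, a j := by ring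
  linarith [hv k]

end Game

section NEx
variable {m : ℕ} {γ : ℝ} {v : Fin m → ℝ} {c : Fin 2 → ℝ}
  {ρ : Fin 2 → Matrix (Fin m) (Fin m) ℝ} {e : Fin 2 → Fin m → ℝ}

lemma NE_BR0 (h : IsNashEq γ v c ρ e) : BR0 γ v (c 0) (ρ 0) (ρ 1) (e 0) (e 1) := by
  intro a' ha'
  have h2 := h.2 0 a' ha'
  simp only [payoff, show (1 - (0:Fin 2)) = 1 from rfl, Function.update_self,
    Function.update_of_ne (show (1:Fin 2) ≠ 0 by decide)] at h2
  exact h2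

lemma NE_BR1raw (h : IsNashEq γ v c ρ e) (b' : Fin m → ℝ) (hb' : ∀ k, 0 ≤ b' k) :
    (∑ k, v k * tullock γ (effY (ρ 1) b' k) (effY (ρ 0) (e 0) k)) - c 1 * ∑ k, b' k
      ≤ (∑ k, v k * tullock γ (effY (ρ 1) (e 1) k) (effY (ρ 0) (e 0) k)) - c 1 * ∑ k, e 1 k := by
  have h2 := h.2 1 b' hb'
  simp only [payoff, show (1 - (1:Fin 2)) = 0 from rfl, Function.update_self,
    Function.update_of_ne (show (0:Fin 2) ≠ 1 by decide)] at h2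
  exact h2

lemma NE_BR1 (hγ0 : 0 < γ) (hv : ∀ k, 0 < v k) (hc0 : 0 < c 0) (hc1 : 0 < c 1)
    (hρ0 : ∀ k l, 0 ≤ ρ 0 k l) (hρ1 : ∀ k l, 0 ≤ ρ 1 k l)
    (h : IsNashEq γ v c ρ e) : BR1 γ v (c 1) (ρ 0) (ρ 1) (e 0) (e 1) := by
  set a := e 0 with hadef
  set b := e 1 with hbdef
  have ha : ∀ k, 0 ≤ a k := h.1 0
  have hb : ∀ k, 0 ≤ b k := h.1 1
  have hL1 : ∀ k, effY (ρ 0) a k = 0 → 0 < effY (ρ 1) b k := by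
    intro k hk
    by_contra h0
    have hb0 : effY (ρ 1) b k = 0 := le_antisymm (not_lt.1 h0) (effY_nonneg hρ1 hb k)
    exact (posOfZero hγ0 hv hc0 hρ0 hρ1 ha hb (NE_BR0 h) k hb0).ne' hk
  intro b' hb'
  apply le_of_forall_pos_le_add
  intro ε' hε'
  set ε := ε' / (c 1 * m + 1) with hεdef
  have hcm : (0:ℝ) ≤ c 1 * m := by positivity
  have hε : 0 < ε := by rw [hεdef]; positivity
  set b'' := fun l => b' l + (if effY (ρ 0) a l = 0 then ε else 0) with hb''def
  have hb'' : ∀ l, 0 ≤ b'' l := by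
    intro l
    rw [hb''def]
    have : (0:ℝ) ≤ if effY (ρ 0) a l = 0 then ε else 0 := by positivity
    have := hb' l
    simp only []
    linarith
  have hble : ∀ l, b' l ≤ b'' l := by
    intro l
    rw [hb''def]
    have : (0:ℝ) ≤ if effY (ρ 0) a l = 0 then ε else 0 := by positivity
    simp only []
    linarith
  have hNE := NE_BR1raw h b'' hb''
  -- Step A
  have hA : ∑ k, v k * (1 - tullock γ (effY (ρ 0) a k) (effY (ρ 1) b' k))
      ≤ ∑ k, v k * tullock γ (effY (ρ 1) b'' k) (effY (ρ 0) a k) := by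
    apply Finset.sum_le_sum
    intro k _
    apply mul_le_mul_of_nonneg_left _ (hv k).le
    rcases eq_or_lt_of_le (effY_nonneg hρ0 ha k) with h0 | h0
    · rw [← h0, tullock_zero_left hγ0]
      have hpos : 0 < effY (ρ 1) b'' k := by
        have h1 : ε ≤ b'' k := by
          rw [hb''def]
          simp only []
          rw [if_pos h0.symm]
          linarith [hb' k]
        have h2 := self_le_effY hρ1 hb'' k
        linarith
      rw [tullock_pos_zero hγ0 hpos]
      norm_num
    · rw [← tullock_compl hγ0 (effY_nonneg hρ0 ha k) (effY_nonneg hρ1 hb' k) (Or.inl h0)]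
      exact tullock_mono hγ0 (effY_nonneg hρ1 hb' k) (effY_mono hρ1 hble k)
        (effY_nonneg hρ0 ha k)
  -- Step B
  have hB : ∑ k, v k * tullock γ (effY (ρ 1) b k) (effY (ρ 0) a k)
      = ∑ k, v k * (1 - tullock γ (effY (ρ 0) a k) (effY (ρ 1) b k)) := by
    apply Finset.sum_congr rfl
    intro k _
    congr 1
    rcases eq_or_lt_of_le (effY_nonneg hρ0 ha k) with h0 | h0
    · rw [← h0, tullock_zero_left hγ0, tullock_pos_zero hγ0 (hL1 k h0.symm)]
      norm_num
    · exact tullock_compl hγ0 (effY_nonneg hρ0 ha k) (effY_nonneg hρ1 hb k) (Or.inl h0)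
  -- Step C
  have hC : ∑ k, b'' k ≤ (∑ k, b' k) + m * ε := by
    rw [hb''def]
    simp only []
    rw [Finset.sum_add_distrib]
    have : ∑ k : Fin m, (if effY (ρ 0) a k = 0 then ε else 0) ≤ ∑ k : Fin m, ε := by
      apply Finset.sum_le_sum
      intro k _
      split <;> simp [hε.le]
    rw [Finset.sum_const, Finset.card_univ, Fintype.card_fin, nsmul_eq_mul] at this
    linarith
  -- expand 1 - T sums
  have hexp : ∀ x : Fin m → ℝ, ∑ k, v k * (1 - tullock γ (effY (ρ 0) a k) (effY (ρ 1) x k))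
      = (∑ k, v k) - UU γ v (ρ 0) (ρ 1) a x := by
    intro x
    rw [UU, ← Finset.sum_sub_distrib]
    apply Finset.sum_congr rfl
    intro k _
    ring
  rw [hexp] at hA
  rw [hexp] at hB
  have hND := hNE
  rw [hB] at hND
  -- combine
  have hfinal : UU γ v (ρ 0) (ρ 1) a b + c 1 * ∑ k, b k
      ≤ UU γ v (ρ 0) (ρ 1) a b' + c 1 * ∑ k, b' k + c 1 * (m * ε) := by
    have h1 : c 1 * ∑ k, b'' k ≤ c 1 * ((∑ k, b' k) + m * ε) :=
      mul_le_mul_of_nonneg_left hC hc1.le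
    nlinarith
  have hlast : c 1 * (m * ε) ≤ ε' := by
    rw [hεdef]
    rw [div_eq_mul_inv]
    have h2 : (0:ℝ) < c 1 * m + 1 := by linarith
    rw [mul_comm (ε') _, ← mul_assoc, ← mul_assoc]
    have h3 : c 1 * m * (c 1 * m + 1)⁻¹ ≤ 1 := by
      rw [← div_eq_mul_inv, div_le_one h2]
      linarith
    nlinarith [hε'.le]
  linarith

end NEx

section Inter
variable {m : ℕ} {γ : ℝ} {v : Fin m → ℝ} {c0 c1 : ℝ}
  {ρ0 ρ1 : Matrix (Fin m) (Fin m) ℝ} {a b x y : Fin m → ℝ}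

lemma interchange (ha : ∀ k, 0 ≤ a k) (hb : ∀ k, 0 ≤ b k)
    (hx : ∀ k, 0 ≤ x k) (hy : ∀ k, 0 ≤ y k)
    (hA0 : BR0 γ v c0 ρ0 ρ1 a b) (hA1 : BR1 γ v c1 ρ0 ρ1 a b)
    (hB0 : BR0 γ v c0 ρ0 ρ1 x y) (hB1 : BR1 γ v c1 ρ0 ρ1 x y) :
    BR0 γ v c0 ρ0 ρ1 x b ∧ BR1 γ v c1 ρ0 ρ1 a y := by
  have i1 := hA1 y hy
  have i2 := hB0 a ha
  have i3 := hB1 b hb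
  have i4 := hA0 x hx
  constructor
  · intro a' ha'
    have h5 := hA0 a' ha'
    linarith
  · intro b' hb'
    have h5 := hA1 b' hb'
    linarith

lemma BR0_effY_eq (hγ0 : 0 < γ) (hγ1 : γ ≤ 1) (hv : ∀ k, 0 < v k)
    (hρ0 : ∀ k l, 0 ≤ ρ0 k l) (hρ1 : ∀ k l, 0 ≤ ρ1 k l)
    (ha : ∀ k, 0 ≤ a k) (hx : ∀ k, 0 ≤ x k) (hb : ∀ k, 0 ≤ b k)
    (hc0 : 0 < c0)
    (hA : BR0 γ v c0 ρ0 ρ1 a b) (hX : BR0 γ v c0 ρ0 ρ1 x b) :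
    ∀ k, 0 < effY ρ1 b k → effY ρ0 a k = effY ρ0 x k := by
  intro k0 hbk0
  by_contra hne
  have hval : UU γ v ρ0 ρ1 a b - c0 * ∑ j, a j = UU γ v ρ0 ρ1 x b - c0 * ∑ j, x j :=
    le_antisymm (hX a ha) (hA x hx)
  set z := fun l => (a l + x l) / 2 with hzdef
  have hz : ∀ l, 0 ≤ z l := by
    intro l; rw [hzdef]; simp only []; linarith [ha l, hx l]
  have hzsum : ∑ j, z j = ((∑ j, a j) + ∑ j, x j) / 2 := by
    rw [hzdef, ← Finset.sum_add_distrib, Finset.sum_div]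
  have hkey : (∑ j, (v j * tullock γ (effY ρ0 a j) (effY ρ1 b j)
        + v j * tullock γ (effY ρ0 x j) (effY ρ1 b j)) / 2)
      < ∑ j, v j * tullock γ (effY ρ0 z j) (effY ρ1 b j) := by
    apply Finset.sum_lt_sum
    · intro j _
      rw [effY_avg]
      rcases eq_or_lt_of_le (effY_nonneg hρ1 hb j) with h0 | h0
      · have hpa := posOfZero hγ0 hv hc0 hρ0 hρ1 ha hb hA j h0.symm
        have hpx := posOfZero hγ0 hv hc0 hρ0 hρ1 hx hb hX j h0.symm
        have hpm : 0 < (effY ρ0 a j + effY ρ0 x j) / 2 := by linarith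
        rw [← h0, tullock_pos_zero hγ0 hpa, tullock_pos_zero hγ0 hpx,
          tullock_pos_zero hγ0 hpm]
        ring_nf
        exact le_refl _
      · have hmid := tullock_mid_concave hγ0 hγ1 h0 (effY_nonneg hρ0 ha j)
          (effY_nonneg hρ0 hx j)
        have hv' := (hv j).le
        calc (v j * tullock γ (effY ρ0 a j) (effY ρ1 b j)
              + v j * tullock γ (effY ρ0 x j) (effY ρ1 b j)) / 2
            = v j * ((tullock γ (effY ρ0 a j) (effY ρ1 b j)
              + tullock γ (effY ρ0 x j) (effY ρ1 b j)) / 2) := by ring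
          _ ≤ v j * tullock γ ((effY ρ0 a j + effY ρ0 x j) / 2) (effY ρ1 b j) :=
              mul_le_mul_of_nonneg_left hmid hv'
    · refine ⟨k0, Finset.mem_univ k0, ?_⟩
      rw [effY_avg]
      have hmid := tullock_mid_concave_strict hγ0 hγ1 hbk0 (effY_nonneg hρ0 ha k0)
        (effY_nonneg hρ0 hx k0) hne
      calc (v k0 * tullock γ (effY ρ0 a k0) (effY ρ1 b k0)
            + v k0 * tullock γ (effY ρ0 x k0) (effY ρ1 b k0)) / 2
          = v k0 * ((tullock γ (effY ρ0 a k0) (effY ρ1 b k0)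
            + tullock γ (effY ρ0 x k0) (effY ρ1 b k0)) / 2) := by ring
        _ < v k0 * tullock γ ((effY ρ0 a k0 + effY ρ0 x k0) / 2) (effY ρ1 b k0) :=
            (mul_lt_mul_iff_right₀ (hv k0)).2 hmid
  have hsplit : ∑ j, (v j * tullock γ (effY ρ0 a j) (effY ρ1 b j)
        + v j * tullock γ (effY ρ0 x j) (effY ρ1 b j)) / 2
      = (UU γ v ρ0 ρ1 a b + UU γ v ρ0 ρ1 x b) / 2 := by
    rw [UU, UU, ← Finset.sum_add_distrib, Finset.sum_div]
  rw [hsplit] at hkey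
  have hkey2 : (UU γ v ρ0 ρ1 a b + UU γ v ρ0 ρ1 x b) / 2 < UU γ v ρ0 ρ1 z b := hkey
  have hdev := hA z hz
  rw [hzsum] at hdev
  linarith

lemma BR1_effY_eq (hγ0 : 0 < γ) (hγ1 : γ ≤ 1) (hv : ∀ k, 0 < v k)
    (hρ0 : ∀ k l, 0 ≤ ρ0 k l) (hρ1 : ∀ k l, 0 ≤ ρ1 k l)
    (ha : ∀ k, 0 ≤ a k) (hb : ∀ k, 0 ≤ b k) (hy : ∀ k, 0 ≤ y k)
    (hA : BR1 γ v c1 ρ0 ρ1 a b) (hY : BR1 γ v c1 ρ0 ρ1 a y) :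
    ∀ k, 0 < effY ρ0 a k → effY ρ1 b k = effY ρ1 y k := by
  intro k0 hak0
  by_contra hne
  have hval : UU γ v ρ0 ρ1 a b + c1 * ∑ j, b j = UU γ v ρ0 ρ1 a y + c1 * ∑ j, y j :=
    le_antisymm (hA y hy) (hY b hb)
  set z := fun l => (b l + y l) / 2 with hzdef
  have hz : ∀ l, 0 ≤ z l := by
    intro l; rw [hzdef]; simp only []; linarith [hb l, hy l]
  have hzsum : ∑ j, z j = ((∑ j, b j) + ∑ j, y j) / 2 := by
    rw [hzdef, ← Finset.sum_add_distrib, Finset.sum_div]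
  have hkey : ∑ j, v j * tullock γ (effY ρ0 a j) (effY ρ1 z j)
      < ∑ j, (v j * tullock γ (effY ρ0 a j) (effY ρ1 b j)
        + v j * tullock γ (effY ρ0 a j) (effY ρ1 y j)) / 2 := by
    apply Finset.sum_lt_sum
    · intro j _
      rw [effY_avg]
      rcases eq_or_lt_of_le (effY_nonneg hρ0 ha j) with h0 | h0
      · rw [← h0, tullock_zero_left hγ0, tullock_zero_left hγ0, tullock_zero_left hγ0]
        ring_nf
        exact le_refl _
      · have hmid := tullock_mid_convex hγ0 hγ1 h0 (effY_nonneg hρ1 hb j)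
          (effY_nonneg hρ1 hy j)
        have hv' := (hv j).le
        calc v j * tullock γ (effY ρ0 a j) ((effY ρ1 b j + effY ρ1 y j) / 2)
            ≤ v j * ((tullock γ (effY ρ0 a j) (effY ρ1 b j)
              + tullock γ (effY ρ0 a j) (effY ρ1 y j)) / 2) :=
              mul_le_mul_of_nonneg_left hmid hv'
          _ = (v j * tullock γ (effY ρ0 a j) (effY ρ1 b j)
              + v j * tullock γ (effY ρ0 a j) (effY ρ1 y j)) / 2 := by ring
    · refine ⟨k0, Finset.mem_univ k0, ?_⟩
      rw [effY_avg]
      have hmid := tullock_mid_convex_strict hγ0 hγ1 hak0 (effY_nonneg hρ1 hb k0)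
        (effY_nonneg hρ1 hy k0) hne
      calc v k0 * tullock γ (effY ρ0 a k0) ((effY ρ1 b k0 + effY ρ1 y k0) / 2)
          < v k0 * ((tullock γ (effY ρ0 a k0) (effY ρ1 b k0)
            + tullock γ (effY ρ0 a k0) (effY ρ1 y k0)) / 2) :=
            (mul_lt_mul_iff_right₀ (hv k0)).2 hmid
        _ = (v k0 * tullock γ (effY ρ0 a k0) (effY ρ1 b k0)
            + v k0 * tullock γ (effY ρ0 a k0) (effY ρ1 y k0)) / 2 := by ring
  have hsplit : ∑ j, (v j * tullock γ (effY ρ0 a j) (effY ρ1 b j)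
        + v j * tullock γ (effY ρ0 a j) (effY ρ1 y j)) / 2
      = (UU γ v ρ0 ρ1 a b + UU γ v ρ0 ρ1 a y) / 2 := by
    rw [UU, UU, ← Finset.sum_add_distrib, Finset.sum_div]
  rw [hsplit] at hkey
  have hkey2 : UU γ v ρ0 ρ1 a z < (UU γ v ρ0 ρ1 a b + UU γ v ρ0 ρ1 a y) / 2 := hkey
  have hdev := hA z hz
  rw [hzsum] at hdev
  linarith

end Inter

section Supp
variable {m : ℕ} {γ : ℝ} {v : Fin m → ℝ} {c0 c1 : ℝ}
  {ρ0 ρ1 : Matrix (Fin m) (Fin m) ℝ} {a b x y : Fin m → ℝ}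

lemma supp_invariant (hγ0 : 0 < γ) (hγ1 : γ ≤ 1) (hv : ∀ k, 0 < v k)
    (hc0 : 0 < c0) (hρ0 : ∀ k l, 0 ≤ ρ0 k l) (hρ1 : ∀ k l, 0 ≤ ρ1 k l)
    (ha : ∀ k, 0 ≤ a k) (hb : ∀ k, 0 ≤ b k)
    (hx : ∀ k, 0 ≤ x k) (hy : ∀ k, 0 ≤ y k)
    (hA0 : BR0 γ v c0 ρ0 ρ1 a b) (hA1 : BR1 γ v c1 ρ0 ρ1 a b)
    (hB0 : BR0 γ v c0 ρ0 ρ1 x y) (hB1 : BR1 γ v c1 ρ0 ρ1 x y) :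
    (∀ k, 0 < effY ρ0 a k ↔ 0 < effY ρ0 x k) ∧
    (∀ k, 0 < effY ρ1 b k ↔ 0 < effY ρ1 y k) := by
  obtain ⟨hXb, hAy⟩ := interchange ha hb hx hy hA0 hA1 hB0 hB1
  have h0eq : ∀ k, 0 < effY ρ1 b k → effY ρ0 a k = effY ρ0 x k :=
    BR0_effY_eq hγ0 hγ1 hv hρ0 hρ1 ha hx hb hc0 hA0 hXb
  have S0 : ∀ k, 0 < effY ρ0 a k ↔ 0 < effY ρ0 x k := by
    intro k
    rcases eq_or_lt_of_le (effY_nonneg hρ1 hb k) with hbk | hbk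
    · exact iff_of_true (posOfZero hγ0 hv hc0 hρ0 hρ1 ha hb hA0 k hbk.symm)
        (posOfZero hγ0 hv hc0 hρ0 hρ1 hx hb hXb k hbk.symm)
    · rw [h0eq k hbk]
  refine ⟨S0, ?_⟩
  have h1eq : ∀ k, 0 < effY ρ0 a k → effY ρ1 b k = effY ρ1 y k :=
    BR1_effY_eq hγ0 hγ1 hv hρ0 hρ1 ha hb hy hA1 hAy
  intro k
  rcases eq_or_lt_of_le (effY_nonneg hρ0 ha k) with hak | hak
  · have hxk : effY ρ0 x k = 0 := by
      have h1 := (effY_nonneg hρ0 hx k)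
      rcases eq_or_lt_of_le h1 with h2 | h2
      · exact h2.symm
      · exact absurd ((S0 k).2 h2) (by rw [← hak]; exact lt_irrefl 0)
    have hbpos : 0 < effY ρ1 b k := by
      by_contra h0
      have hb0 : effY ρ1 b k = 0 := le_antisymm (not_lt.1 h0) (effY_nonneg hρ1 hb k)
      exact (posOfZero hγ0 hv hc0 hρ0 hρ1 ha hb hA0 k hb0).ne' hak.symm
    have hypos : 0 < effY ρ1 y k := by
      by_contra h0
      have hy0 : effY ρ1 y k = 0 := le_antisymm (not_lt.1 h0) (effY_nonneg hρ1 hy k)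
      exact (posOfZero hγ0 hv hc0 hρ0 hρ1 hx hy hB0 k hy0).ne' hxk
    exact iff_of_true hbpos hypos
  · rw [h1eq k hak]

end Supp

/-- the partition of battlefields into `B⁺`, `A₁`, `A₂` is the
same across all pairs of equilibrium effective-effort vectors (each pair
possibly assembled from two different equilibria). -/
theorem equilibrium_battlefield_partition_unique (m : ℕ) (γ : ℝ) (hγ0 : 0 < γ) (hγ1 : γ ≤ 1)
    (v : Fin m → ℝ) (hv : ∀ k, 0 < v k)
    (c : Fin 2 → ℝ) (hc : ∀ i, 0 < c i)
    (ρ : Fin 2 → Matrix (Fin m) (Fin m) ℝ)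
    (hρ : ∀ i k l, 0 ≤ ρ i k l) (hρd : ∀ i k, ρ i k k = 0)
    (eA eB eC eD : Fin 2 → Fin m → ℝ)
    (hA : IsNashEq γ v c ρ eA) (hB : IsNashEq γ v c ρ eB)
    (hC : IsNashEq γ v c ρ eC) (hD : IsNashEq γ v c ρ eD) :
    (∀ k, (0 < effY (ρ 0) (eA 0) k ∧ 0 < effY (ρ 1) (eB 1) k) ↔
          (0 < effY (ρ 0) (eC 0) k ∧ 0 < effY (ρ 1) (eD 1) k)) ∧
    (∀ (i : Fin 2) (k : Fin m),
      (0 < effY (ρ i) (![eA 0, eB 1] i) k ∧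
        effY (ρ (1 - i)) (![eA 0, eB 1] (1 - i)) k = 0) ↔
      (0 < effY (ρ i) (![eC 0, eD 1] i) k ∧
        effY (ρ (1 - i)) (![eC 0, eD 1] (1 - i)) k = 0)) := by
  have hρ0 := hρ 0
  have hρ1 := hρ 1
  -- saddle data for the four equilibria
  have supAC := supp_invariant hγ0 hγ1 hv (hc 0) hρ0 hρ1 (hA.1 0) (hA.1 1) (hC.1 0) (hC.1 1)
    (NE_BR0 hA) (NE_BR1 hγ0 hv (hc 0) (hc 1) hρ0 hρ1 hA)
    (NE_BR0 hC) (NE_BR1 hγ0 hv (hc 0) (hc 1) hρ0 hρ1 hC)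
  have supBD := supp_invariant hγ0 hγ1 hv (hc 0) hρ0 hρ1 (hB.1 0) (hB.1 1) (hD.1 0) (hD.1 1)
    (NE_BR0 hB) (NE_BR1 hγ0 hv (hc 0) (hc 1) hρ0 hρ1 hB)
    (NE_BR0 hD) (NE_BR1 hγ0 hv (hc 0) (hc 1) hρ0 hρ1 hD)
  have S0 : ∀ k, 0 < effY (ρ 0) (eA 0) k ↔ 0 < effY (ρ 0) (eC 0) k := supAC.1
  have S1 : ∀ k, 0 < effY (ρ 1) (eB 1) k ↔ 0 < effY (ρ 1) (eD 1) k := supBD.2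
  have hzero : ∀ {t : ℝ}, 0 ≤ t → (t = 0 ↔ ¬ 0 < t) := by
    intro t ht
    constructor
    · intro h1; rw [h1]; exact lt_irrefl 0
    · intro h1; exact le_antisymm (not_lt.1 h1) ht
  have hYA := fun k => effY_nonneg hρ0 (hA.1 0) k
  have hYB := fun k => effY_nonneg hρ1 (hB.1 1) k
  have hYC := fun k => effY_nonneg hρ0 (hC.1 0) k
  have hYD := fun k => effY_nonneg hρ1 (hD.1 1) k
  constructor
  · intro k
    constructor
    · rintro ⟨h1, h2⟩; exact ⟨(S0 k).1 h1, (S1 k).1 h2⟩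
    · rintro ⟨h1, h2⟩; exact ⟨(S0 k).2 h1, (S1 k).2 h2⟩
  · intro i k
    have hi : i = 0 ∨ i = 1 := by
      fin_cases i
      · exact Or.inl rfl
      · exact Or.inr rfl
    rcases hi with rfl | rfl
    · simp only [Matrix.cons_val_zero, show (1 - (0:Fin 2)) = 1 from rfl,
        Matrix.cons_val_one, Matrix.head_cons]
      constructor
      · rintro ⟨h1, h2⟩
        refine ⟨(S0 k).1 h1, ?_⟩
        rw [hzero (hYD k)]
        rw [hzero (hYB k)] at h2
        exact fun hp => h2 ((S1 k).2 hp)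
      · rintro ⟨h1, h2⟩
        refine ⟨(S0 k).2 h1, ?_⟩
        rw [hzero (hYB k)]
        rw [hzero (hYD k)] at h2
        exact fun hp => h2 ((S1 k).1 hp)
    · simp only [Matrix.cons_val_one, Matrix.head_cons, show (1 - (1:Fin 2)) = 0 from rfl,
        Matrix.cons_val_zero]
      constructor
      · rintro ⟨h1, h2⟩
        refine ⟨(S1 k).1 h1, ?_⟩
        rw [hzero (hYC k)]
        rw [hzero (hYA k)] at h2
        exact fun hp => h2 ((S0 k).2 hp)
      · rintro ⟨h1, h2⟩
        refine ⟨(S1 k).2 h1, ?_⟩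
        rw [hzero (hYA k)]
        rw [hzero (hYC k)] at h2
        exact fun hp => h2 ((S0 k).1 hp)
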